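/- Over a field k, suppose f(x) = x₁f₂(x₃,…,x_n) + f₃(x₂,…,x_n) and g(x) = x₁x₂ + g₂(x₃,…,x_n), where f₂ is a quadratic form, f₃ a cubic form, g₂ a quadratic form. Define H(x₂,…,x_n) = x₂·f₃(x₂,…,x_n) − f₂(x₃,…,x_n)·g₂(x₃,…,x_n). If (x₂,…,x_n) is a non-singular zero of H with x₂ ≠ 0, then setting x₁ = −x₂⁻¹g₂(x₃,…,x_n) gives a common zero x of f and g at which the gradients ∇f(x) and ∇g(x) are linearly independent. -/

import Mathlib

open MvPolynomial

lemma vars_pderiv_subset {σ R : Type*} [CommSemiring R] (j : σ) (p : MvPolynomial σ R) :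
    (pderiv j p).vars ⊆ p.vars := by
  classical
  intro i hi
  have h : pderiv j p
      = ∑ m ∈ p.support, monomial (m - Finsupp.single j 1) (coeff m p * m j) := by
    conv_lhs => rw [p.as_sum]
    rw [map_sum]
    simp only [pderiv_monomial]
  rw [h] at hi
  obtain ⟨m, hm, him⟩ := Finset.mem_biUnion.mp (vars_sum_subset _ _ hi)
  have hms : i ∈ (m - Finsupp.single j 1).support := by
    by_cases hc : (coeff m p * m j) = 0
    · simp [hc, vars_0] at him
    · rwa [vars_monomial hc] at him
  exact (mem_vars i).mpr ⟨m, hm, Finsupp.support_tsub hms⟩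

lemma eval_update_of_not_mem_vars {σ R : Type*} [CommSemiring R] [DecidableEq σ]
    {p : MvPolynomial σ R} {j : σ} (h : j ∉ p.vars) (a : σ → R) (c : R) :
    eval (Function.update a j c) p = eval a p := by
  refine eval₂Hom_congr' rfl (fun i hi _ => ?_) rfl
  exact Function.update_of_ne (by rintro rfl; exact h hi) _ _

/-- If `f = x₁f₂ + f₃`, `g = x₁x₂ + g₂` and `H = x₂f₃ - f₂g₂`, then any
non-singular zero of `H` with `x₂ ≠ 0` lifts (by setting
`x₁ = -x₂⁻¹ g₂`) to a common zero of `(f,g)` with linearly independent gradients.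
Variable `0` plays the role of `x₁` and variable `1` that of `x₂`. -/
theorem nonsingular_zero_of_H {k : Type*} [Field k] (n : ℕ)
    (f₂ f₃ g₂ : MvPolynomial (Fin (n + 2)) k)
    (hf₂ : f₂.IsHomogeneous 2) (hf₃ : f₃.IsHomogeneous 3) (hg₂ : g₂.IsHomogeneous 2)
    (hf₂v : (0 : Fin (n + 2)) ∉ f₂.vars ∧ (1 : Fin (n + 2)) ∉ f₂.vars)
    (hf₃v : (0 : Fin (n + 2)) ∉ f₃.vars)
    (hg₂v : (0 : Fin (n + 2)) ∉ g₂.vars ∧ (1 : Fin (n + 2)) ∉ g₂.vars)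
    (f g H : MvPolynomial (Fin (n + 2)) k)
    (hf : f = X 0 * f₂ + f₃)
    (hg : g = X 0 * X 1 + g₂)
    (hH : H = X 1 * f₃ - f₂ * g₂)
    (a : Fin (n + 2) → k) (haH : eval a H = 0)
    (hans : ∃ i, eval a (pderiv i H) ≠ 0) (ha1 : a 1 ≠ 0)
    (x : Fin (n + 2) → k) (hx : x = Function.update a 0 (-(a 1)⁻¹ * eval a g₂)) :
    eval x f = 0 ∧ eval x g = 0 ∧
      LinearIndependent k ![fun i => eval x (pderiv i f), fun i => eval x (pderiv i g)] := by
  obtain ⟨hf₂0, hf₂1⟩ := hf₂v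
  obtain ⟨hg₂0, hg₂1⟩ := hg₂v
  have h10 : (1 : Fin (n + 2)) ≠ 0 := Fin.ne_of_val_ne (by simp)
  have hx0 : x 0 = -(a 1)⁻¹ * eval a g₂ := by rw [hx]; simp
  have hx1 : x 1 = a 1 := by rw [hx]; exact Function.update_of_ne h10 _ _
  have key : ∀ p : MvPolynomial (Fin (n + 2)) k, (0 : Fin (n + 2)) ∉ p.vars →
      eval x p = eval a p := by
    intro p hp
    rw [hx]; exact eval_update_of_not_mem_vars hp a _
  have e2 : eval x f₂ = eval a f₂ := key _ hf₂0
  have e3 : eval x f₃ = eval a f₃ := key _ hf₃v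
  have eg : eval x g₂ = eval a g₂ := key _ hg₂0
  have d2 : ∀ i, eval x (pderiv i f₂) = eval a (pderiv i f₂) :=
    fun i => key _ (fun h => hf₂0 (vars_pderiv_subset i f₂ h))
  have d3 : ∀ i, eval x (pderiv i f₃) = eval a (pderiv i f₃) :=
    fun i => key _ (fun h => hf₃v (vars_pderiv_subset i f₃ h))
  have dg : ∀ i, eval x (pderiv i g₂) = eval a (pderiv i g₂) :=
    fun i => key _ (fun h => hg₂0 (vars_pderiv_subset i g₂ h))
  -- pderivs of X 0 and X 1 evaluate the same at x and a
  have hX0 : ∀ i : Fin (n + 2), eval x (pderiv i (X 0 : MvPolynomial (Fin (n + 2)) k))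
      = eval a (pderiv i (X 0 : MvPolynomial (Fin (n + 2)) k)) := by
    intro i
    rcases eq_or_ne (0 : Fin (n + 2)) i with h | h
    · subst h; simp
    · rw [pderiv_X_of_ne h]; simp
  have hX1 : ∀ i : Fin (n + 2), eval x (pderiv i (X 1 : MvPolynomial (Fin (n + 2)) k))
      = eval a (pderiv i (X 1 : MvPolynomial (Fin (n + 2)) k)) := by
    intro i
    rcases eq_or_ne (1 : Fin (n + 2)) i with h | h
    · subst h; simp
    · rw [pderiv_X_of_ne h]; simp
  have haH' : a 1 * eval a f₃ - eval a f₂ * eval a g₂ = 0 := by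
    rw [hH] at haH; simpa using haH
  have hFG : eval a f₂ * eval a g₂ = a 1 * eval a f₃ := by linear_combination -haH'
  have h3 : eval a f₃ = (a 1)⁻¹ * (eval a f₂ * eval a g₂) := by
    rw [hFG, inv_mul_cancel_left₀ ha1]
  refine ⟨?_, ?_, ?_⟩
  · rw [hf, map_add, map_mul, eval_X, e2, e3, hx0, h3]
    ring
  · rw [hg, map_add, map_mul, eval_X, eval_X, eg, hx0, hx1]
    field_simp
    ring
  · -- gradient formulas
    have hu : ∀ i, eval x (pderiv i f) =
        eval a (pderiv i (X 0 : MvPolynomial (Fin (n + 2)) k)) * eval a f₂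
          + x 0 * eval a (pderiv i f₂) + eval a (pderiv i f₃) := by
      intro i
      rw [hf, map_add, pderiv_mul, map_add, map_add, map_mul, map_mul,
        hX0, eval_X, e2, d2, d3]
    have hv : ∀ i, eval x (pderiv i g) =
        eval a (pderiv i (X 0 : MvPolynomial (Fin (n + 2)) k)) * a 1
          + x 0 * eval a (pderiv i (X 1 : MvPolynomial (Fin (n + 2)) k))
          + eval a (pderiv i g₂) := by
      intro i
      rw [hg, map_add, pderiv_mul, map_add, map_add, map_mul, map_mul,
        hX0, hX1, eval_X, eval_X, hx1, dg]
    have hw : ∀ i, eval a (pderiv i H) =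
        eval a (pderiv i (X 1 : MvPolynomial (Fin (n + 2)) k)) * eval a f₃
          + a 1 * eval a (pderiv i f₃)
          - eval a (pderiv i f₂) * eval a g₂ - eval a f₂ * eval a (pderiv i g₂) := by
      intro i
      rw [hH]
      simp only [map_sub, pderiv_mul, map_add, map_mul, eval_X]
      ring
    -- pderiv of f₂, f₃, g₂ at 0 vanish; and at 1 for f₂, g₂
    have p20 : eval a (pderiv (0 : Fin (n + 2)) f₂) = 0 := by
      rw [pderiv_eq_zero_of_notMem_vars hf₂0]; simp
    have p30 : eval a (pderiv (0 : Fin (n + 2)) f₃) = 0 := by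
      rw [pderiv_eq_zero_of_notMem_vars hf₃v]; simp
    have pg0 : eval a (pderiv (0 : Fin (n + 2)) g₂) = 0 := by
      rw [pderiv_eq_zero_of_notMem_vars hg₂0]; simp
    have htx : a 1 * x 0 = -eval a g₂ := by
      rw [hx0]; field_simp
    rw [LinearIndependent.pair_iff]
    intro s c hsc
    obtain ⟨i₀, hi₀⟩ := hans
    have h0 := congrFun hsc 0
    have hi := congrFun hsc i₀
    simp only [Pi.add_apply, Pi.smul_apply, smul_eq_mul, Pi.zero_apply] at h0 hi
    rw [hu, hv] at h0 hi
    rw [p20, p30, pg0] at h0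
    have hp00 : eval a (pderiv (0 : Fin (n + 2))
        (X 0 : MvPolynomial (Fin (n + 2)) k)) = 1 := by simp
    have hp01 : eval a (pderiv (0 : Fin (n + 2))
        (X 1 : MvPolynomial (Fin (n + 2)) k)) = 0 := by
      rw [pderiv_X_of_ne h10]; simp
    rw [hp00, hp01] at h0
    -- h0 : s * (1 * eval a f₂ + x 0 * 0 + 0) + c * (1 * a 1 + x 0 * 0 + 0) = 0
    have h0' : s * eval a f₂ + c * a 1 = 0 := by linear_combination h0
    set ε := eval a (pderiv i₀ (X 0 : MvPolynomial (Fin (n + 2)) k)) with hε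
    set δ := eval a (pderiv i₀ (X 1 : MvPolynomial (Fin (n + 2)) k)) with hδ
    have keyV : s * (a 1 * eval a (pderiv i₀ H)) = 0 := by
      rw [hw]
      linear_combination (a 1)^2 * hi
        - (s * a 1 * eval a (pderiv i₀ f₂) + δ * c * a 1) * htx
        - (ε * (a 1)^2 - δ * eval a g₂ + a 1 * eval a (pderiv i₀ g₂)) * h0'
        - s * δ * hFG
    have hs : s = 0 := by
      rcases mul_eq_zero.mp keyV with h | h
      · exact h
      · exact absurd (mul_eq_zero.mp h) (by push_neg; exact ⟨ha1, hi₀⟩)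
    refine ⟨hs, ?_⟩
    rw [hs] at h0'
    have : c * a 1 = 0 := by linear_combination h0'
    exact (mul_eq_zero.mp this).resolve_right ha1
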